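/- Let n ≥ 1, let λ ∈ ℝ, and let ψ : ℝ → ℂ be a function that is smooth on (−π, π), even, with ψ(0) = 1, and satisfies the radial eigenfunction equation of the spherical Laplacian: ψ″(r) + 2n·(cos r/sin r)·ψ′(r) = (λ² + n²)·ψ(r) for all r with 0 < |r| < π. Then (D̃ψ)(r) = cosh(λr) for all r ∈ (−π, π), where D̃ = (1/(2n−1)!!)·∏_{k=1}^{n} (sin r·(d/dr) + (2k−1)·cos r), composed with smaller values of k to the left. -/

import Mathlib

/-- The factor `Ã_k` given by `(Ã_k g)(r) = sin r · g'(r) + (2k-1) cos r · g(r)`. -/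
noncomputable def Asph (k : ℕ) (g : ℝ → ℂ) : ℝ → ℂ :=
  fun r => (Real.sin r : ℂ) * deriv g r + (2 * (k : ℂ) - 1) * (Real.cos r : ℂ) * g r

/-- `AsphChain n f = Ã₁(Ã₂(⋯(Ãₙ f)⋯))`, the composition with smaller indices to
the left. -/
noncomputable def AsphChain : ℕ → (ℝ → ℂ) → (ℝ → ℂ)
  | 0, f => f
  | n + 1, f => AsphChain n (Asph (n + 1) f)

/-- The shift operator `D̃ = (1/(2n-1)!!) ∏_{k=1}^n (sin r d/dr + (2k-1) cos r)`. -/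
noncomputable def Dsph (n : ℕ) (f : ℝ → ℂ) : ℝ → ℂ :=
  fun r => ((Nat.doubleFactorial (2 * n - 1) : ℂ))⁻¹ * AsphChain n f r

open Set Real Filter Topology

lemma sin_ne_zero_of_abs {r : ℝ} (h1 : 0 < |r|) (h2 : |r| < Real.pi) : Real.sin r ≠ 0 := by
  have hpos : 0 < Real.sin |r| := Real.sin_pos_of_pos_of_lt_pi h1 h2
  rcases le_or_gt 0 r with h | h
  · rw [abs_of_nonneg h] at hpos; exact ne_of_gt hpos
  · rw [abs_of_neg h, Real.sin_neg] at hpos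
    exact fun hc => by simp [hc] at hpos

lemma eq_of_hasDerivAt_zero {f : ℝ → ℂ} {s : Set ℝ} (hs : Convex ℝ s)
    (hf : ∀ x ∈ s, HasDerivAt f 0 x) {x y : ℝ} (hx : x ∈ s) (hy : y ∈ s) : f x = f y := by
  have h := Convex.norm_image_sub_le_of_norm_hasDerivWithin_le (f' := fun _ => (0:ℂ)) (C := 0)
    (fun z hz => (hf z hz).hasDerivWithinAt) (fun z _ => by simp) hs hx hy
  have : ‖f y - f x‖ = 0 := le_antisymm (by simpa using h) (norm_nonneg _)
  exact (sub_eq_zero.mp (norm_eq_zero.mp this)).symm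

lemma hasDerivAt_cexp_real (c : ℂ) (r : ℝ) :
    HasDerivAt (fun t : ℝ => Complex.exp (c * t)) (c * Complex.exp (c * r)) r := by
  have h : HasDerivAt (fun z : ℂ => Complex.exp (c * z)) (Complex.exp (c * r) * (c * 1)) (r : ℂ) :=
    (Complex.hasDerivAt_exp _).comp _ ((hasDerivAt_id _).const_mul c)
  simpa [Function.comp, mul_comm] using h.comp_ofReal

lemma hasDerivAt_ccosh_real (c : ℂ) (r : ℝ) :
    HasDerivAt (fun t : ℝ => Complex.cosh (c * t)) (c * Complex.sinh (c * r)) r := by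
  have h : HasDerivAt (fun z : ℂ => Complex.cosh (c * z)) (Complex.sinh (c * r) * (c * 1)) (r : ℂ) :=
    (Complex.hasDerivAt_cosh _).comp _ ((hasDerivAt_id _).const_mul c)
  simpa [Function.comp, mul_comm] using h.comp_ofReal

lemma hasDerivAt_csinh_real (c : ℂ) (r : ℝ) :
    HasDerivAt (fun t : ℝ => Complex.sinh (c * t)) (c * Complex.cosh (c * r)) r := by
  have h : HasDerivAt (fun z : ℂ => Complex.sinh (c * z)) (Complex.cosh (c * r) * (c * 1)) (r : ℂ) :=
    (Complex.hasDerivAt_sinh _).comp _ ((hasDerivAt_id _).const_mul c)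
  simpa [Function.comp, mul_comm] using h.comp_ofReal

lemma deriv_odd_of_even {ψ : ℝ → ℂ} (heven : ∀ r : ℝ, ψ (-r) = ψ r) (r : ℝ) :
    deriv ψ (-r) = -deriv ψ r := by
  have h : (fun x => ψ (-x)) = ψ := funext heven
  have := deriv_comp_neg (f := ψ) (x := r)
  rw [h] at this
  rw [this]; ring

lemma base_unique (lam : ℝ) (ψ : ℝ → ℂ)
    (hψ : ContDiffOn ℝ (⊤ : ℕ∞) ψ (Set.Ioo (-Real.pi) Real.pi))
    (heven : ∀ r : ℝ, ψ (-r) = ψ r)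
    (hode : ∀ r : ℝ, 0 < |r| → |r| < Real.pi →
      deriv (deriv ψ) r = (lam : ℂ) ^ 2 * ψ r) :
    ∀ r ∈ Set.Ioo (-Real.pi) Real.pi, ψ r = ψ 0 * Complex.cosh ((lam : ℂ) * r) := by
  set I := Set.Ioo (-Real.pi) Real.pi with hIdef
  have hI : IsOpen I := isOpen_Ioo
  have hIc : Convex ℝ I := convex_Ioo _ _
  have h0I : (0 : ℝ) ∈ I := ⟨by linarith [Real.pi_pos], Real.pi_pos⟩
  have hD : ∀ r ∈ I, HasDerivAt ψ (deriv ψ r) r := fun r hr =>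
    ((hψ.differentiableOn (by simp)).differentiableAt (hI.mem_nhds hr)).hasDerivAt
  have hdψ : ContDiffOn ℝ (⊤ : ℕ∞) (deriv ψ) I := hψ.deriv_of_isOpen hI (by simp)
  have hD2 : ∀ r ∈ I, HasDerivAt (deriv ψ) (deriv (deriv ψ) r) r := fun r hr =>
    ((hdψ.differentiableOn (by simp)).differentiableAt (hI.mem_nhds hr)).hasDerivAt
  -- extend the ODE to r = 0 by continuity
  have hodeI : ∀ r ∈ I, deriv (deriv ψ) r = (lam : ℂ) ^ 2 * ψ r := by
    intro r hr
    rcases eq_or_ne r 0 with rfl | hr0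
    · set g : ℝ → ℂ := fun x => deriv (deriv ψ) x - (lam : ℂ) ^ 2 * ψ x with hg
      have hgc : ContinuousOn g I :=
        ((hdψ.deriv_of_isOpen (m := ((⊤:ℕ∞) : WithTop ℕ∞)) hI (by simp)).continuousOn).sub
          (continuousOn_const.mul hψ.continuousOn)
      have hsub : Set.Ioo (0 : ℝ) Real.pi ⊆ I := fun x hx =>
        ⟨by linarith [hx.1, Real.pi_pos], hx.2⟩
      have hne : (𝓝[Set.Ioo (0 : ℝ) Real.pi] (0 : ℝ)).NeBot := by
        rw [← mem_closure_iff_nhdsWithin_neBot, closure_Ioo (ne_of_lt Real.pi_pos)]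
        exact ⟨le_refl _, le_of_lt Real.pi_pos⟩
      have h1 : Filter.Tendsto g (𝓝[Set.Ioo (0 : ℝ) Real.pi] (0 : ℝ)) (𝓝 (g 0)) :=
        ((hgc 0 h0I).mono hsub).tendsto
      have h2 : Filter.Tendsto g (𝓝[Set.Ioo (0 : ℝ) Real.pi] (0 : ℝ)) (𝓝 0) := by
        apply Filter.Tendsto.congr' _ tendsto_const_nhds
        filter_upwards [self_mem_nhdsWithin] with x hx
        have h0x : 0 < |x| := by rw [abs_of_pos hx.1]; exact hx.1
        have hxπ : |x| < Real.pi := by rw [abs_of_pos hx.1]; exact hx.2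
        simp [hg, hode x h0x hxπ]
      have := tendsto_nhds_unique h1 h2
      have : deriv (deriv ψ) 0 - (lam : ℂ) ^ 2 * ψ 0 = 0 := this
      exact sub_eq_zero.mp this
    · have h0x : 0 < |r| := abs_pos.mpr hr0
      have hxπ : |r| < Real.pi := abs_lt.mpr ⟨hr.1, hr.2⟩
      exact hode r h0x hxπ
  have hψ'0 : deriv ψ 0 = 0 := by
    have h := deriv_odd_of_even heven 0
    rw [neg_zero] at h
    have h2 : (2 : ℂ) * deriv ψ 0 = 0 := by linear_combination h
    simpa using h2
  set u : ℝ → ℂ := fun r => ψ r - ψ 0 * Complex.cosh ((lam : ℂ) * r) with hu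
  set u1 : ℝ → ℂ := fun r => deriv ψ r - ψ 0 * ((lam : ℂ) * Complex.sinh ((lam : ℂ) * r)) with hu1
  have hud : ∀ r ∈ I, HasDerivAt u (u1 r) r := fun r hr =>
    (hD r hr).sub ((hasDerivAt_ccosh_real (lam : ℂ) r).const_mul (ψ 0))
  have hu1d : ∀ r ∈ I, HasDerivAt u1 ((lam : ℂ) ^ 2 * u r) r := by
    intro r hr
    have h := (hD2 r hr).sub
      (((hasDerivAt_csinh_real (lam : ℂ) r).const_mul (lam : ℂ)).const_mul (ψ 0))
    convert h using 1
    case e'_4 => rfl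
    case e'_8 => rfl
    rw [hodeI r hr]
    simp only [hu]
    ring
  have hu0 : u 0 = 0 := by simp [hu]
  have hu10 : u1 0 = 0 := by simp [hu1, hψ'0]
  set v : ℝ → ℂ := fun r => Complex.exp ((lam : ℂ) * r) * (u1 r - (lam : ℂ) * u r) with hv
  have hvd : ∀ r ∈ I, HasDerivAt v 0 r := by
    intro r hr
    have h := (hasDerivAt_cexp_real (lam : ℂ) r).mul
      ((hu1d r hr).sub ((hud r hr).const_mul (lam : ℂ)))
    convert h using 1
    case e'_4 => rfl
    case e'_8 => rfl
    rw [Pi.sub_apply]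
    ring
  have hveq : ∀ r ∈ I, u1 r = (lam : ℂ) * u r := by
    intro r hr
    have h := eq_of_hasDerivAt_zero hIc hvd hr h0I
    have hv0 : v 0 = 0 := by simp [hv, hu10, hu0]
    rw [hv0] at h
    rcases mul_eq_zero.mp h with h' | h'
    · exact absurd h' (Complex.exp_ne_zero _)
    · exact sub_eq_zero.mp h'
  set w : ℝ → ℂ := fun r => Complex.exp (-(lam : ℂ) * r) * u r with hw
  have hwd : ∀ r ∈ I, HasDerivAt w 0 r := by
    intro r hr
    have h := (hasDerivAt_cexp_real (-(lam : ℂ)) r).mul (hud r hr)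
    rw [hveq r hr] at h
    convert h using 1
    case e'_4 => rfl
    case e'_8 => rfl
    ring
  intro r hr
  have h := eq_of_hasDerivAt_zero hIc hwd hr h0I
  have hw0 : w 0 = 0 := by simp [hw, hu0]
  rw [hw0] at h
  have hu_r : u r = 0 := by
    rcases mul_eq_zero.mp h with h' | h'
    · exact absurd h' (Complex.exp_ne_zero _)
    · exact h'
  have := sub_eq_zero.mp hu_r
  simpa [hu, sub_eq_zero] using hu_r

lemma df_step (m : ℕ) : ((2 * (m + 1) - 1).doubleFactorial : ℕ) =
    (2 * m + 1) * (2 * m - 1).doubleFactorial := by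
  rcases m with _ | k
  · rfl
  · have h1 : 2 * (k + 1 + 1) - 1 = (2 * (k + 1) - 1) + 2 := by omega
    rw [h1, Nat.doubleFactorial_add_two]
    congr 1

lemma key (lam : ℝ) : ∀ (m : ℕ) (ψ : ℝ → ℂ),
    ContDiffOn ℝ (⊤ : ℕ∞) ψ (Set.Ioo (-Real.pi) Real.pi) →
    (∀ r : ℝ, ψ (-r) = ψ r) →
    (∀ r : ℝ, 0 < |r| → |r| < Real.pi →
      deriv (deriv ψ) r + 2 * (m : ℂ) * ((Real.cos r : ℂ) / (Real.sin r : ℂ)) * deriv ψ r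
        = ((lam : ℂ) ^ 2 + (m : ℂ) ^ 2) * ψ r) →
    ∀ r ∈ Set.Ioo (-Real.pi) Real.pi,
      AsphChain m ψ r
        = ψ 0 * ((2 * m - 1).doubleFactorial : ℂ) * Complex.cosh ((lam : ℂ) * r) := by
  intro m
  induction m with
  | zero =>
    intro ψ hψ heven hode r hr
    have hode' : ∀ x : ℝ, 0 < |x| → |x| < Real.pi →
        deriv (deriv ψ) x = (lam : ℂ) ^ 2 * ψ x := by
      intro x h1 h2
      have h := hode x h1 h2
      simpa using h
    have h := base_unique lam ψ hψ heven hode' r hr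
    have hdf : ((2 * 0 - 1 : ℕ).doubleFactorial : ℂ) = 1 := by norm_num [Nat.doubleFactorial]
    show ψ r = ψ 0 * ((2 * 0 - 1 : ℕ).doubleFactorial : ℂ) * Complex.cosh ((lam : ℂ) * r)
    rw [hdf, mul_one, h]
  | succ m ih =>
    intro ψ hψ heven hode r hr
    set I := Set.Ioo (-Real.pi) Real.pi with hIdef
    have hI : IsOpen I := isOpen_Ioo
    have hD : ∀ x ∈ I, HasDerivAt ψ (deriv ψ x) x := fun x hx =>
      ((hψ.differentiableOn (by simp)).differentiableAt (hI.mem_nhds hx)).hasDerivAt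
    have hdψ : ContDiffOn ℝ (⊤ : ℕ∞) (deriv ψ) I := hψ.deriv_of_isOpen hI (by simp)
    have hD2 : ∀ x ∈ I, HasDerivAt (deriv ψ) (deriv (deriv ψ) x) x := fun x hx =>
      ((hdψ.differentiableOn (by simp)).differentiableAt (hI.mem_nhds hx)).hasDerivAt
    set χ : ℝ → ℂ := Asph (m + 1) ψ with hχdef
    set F : ℂ := (lam : ℂ) ^ 2 + (m : ℂ) ^ 2 with hF
    -- smoothness of χ
    have hχsmooth : ContDiffOn ℝ (⊤ : ℕ∞) χ I := by
      apply ContDiffOn.add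
      · exact ((Complex.ofRealCLM.contDiff.comp Real.contDiff_sin).contDiffOn).mul hdψ
      · exact ((contDiffOn_const.mul
          ((Complex.ofRealCLM.contDiff.comp Real.contDiff_cos).contDiffOn))).mul hψ
    -- evenness of χ
    have hodd : ∀ x, deriv ψ (-x) = -deriv ψ x := deriv_odd_of_even heven
    have hχeven : ∀ x : ℝ, χ (-x) = χ x := by
      intro x
      simp only [hχdef, Asph, Real.sin_neg, Real.cos_neg, hodd x, heven x,
        Complex.ofReal_neg]
      ring
    -- derivative of χ on the punctured interval
    have hχd : ∀ x : ℝ, 0 < |x| → |x| < Real.pi →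
        HasDerivAt χ (F * (Real.sin x : ℂ) * ψ x) x := by
      intro x h1 h2
      have hxI : x ∈ I := by
        rcases abs_lt.mp h2 with ⟨ha, hb⟩; exact ⟨ha, hb⟩
      have hs := (Real.hasDerivAt_sin x).ofReal_comp
      have hc := (Real.hasDerivAt_cos x).ofReal_comp
      have h3 := (hs.mul (hD2 x hxI)).add
        (((hc.const_mul ((2 * ((m : ℂ) + 1) - 1))).mul (hD x hxI)))
      have hsC : (Real.sin x : ℂ) ≠ 0 :=
        Complex.ofReal_ne_zero.mpr (sin_ne_zero_of_abs h1 h2)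
      have hodeX := hode x h1 h2
      simp only [Nat.cast_add, Nat.cast_one] at hodeX
      have hode2 : (Real.sin x : ℂ) * deriv (deriv ψ) x
          = ((lam : ℂ) ^ 2 + ((m : ℂ) + 1) ^ 2) * (Real.sin x : ℂ) * ψ x
            - 2 * ((m : ℂ) + 1) * (Real.cos x : ℂ) * deriv ψ x := by
        have hd : (Real.cos x : ℂ) / (Real.sin x : ℂ) * (Real.sin x : ℂ) = (Real.cos x : ℂ) :=
          div_mul_cancel₀ _ hsC
        linear_combination (Real.sin x : ℂ) * hodeX - 2 * ((m : ℂ) + 1) * deriv ψ x * hd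
      have hval : (Real.cos x : ℂ) * deriv ψ x + (Real.sin x : ℂ) * deriv (deriv ψ) x
          + ((2 * ((m : ℂ) + 1) - 1) * -(Real.sin x : ℂ) * ψ x
            + (2 * ((m : ℂ) + 1) - 1) * (Real.cos x : ℂ) * deriv ψ x)
          = F * (Real.sin x : ℂ) * ψ x := by
        rw [hF]
        linear_combination hode2
      have hχfun : χ = fun y => (Real.sin y : ℂ) * deriv ψ y
          + (2 * ((m : ℂ) + 1) - 1) * (Real.cos y : ℂ) * ψ y := by
        funext y
        simp only [hχdef, Asph]
        push_cast
        ring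
      rw [hχfun, ← hval]
      convert h3 using 1
      case e'_4 => rfl
      case e'_8 => rfl
      push_cast
      ring
    -- second derivative on the punctured interval
    set U : Set ℝ := abs ⁻¹' (Set.Ioo 0 Real.pi) with hUdef
    have hU : IsOpen U := isOpen_Ioo.preimage continuous_abs
    have hmemU : ∀ x : ℝ, 0 < |x| → |x| < Real.pi → x ∈ U := fun x h1 h2 => ⟨h1, h2⟩
    have hχderiv : ∀ x ∈ U, deriv χ x = F * (Real.sin x : ℂ) * ψ x := fun x hx =>
      (hχd x hx.1 hx.2).deriv
    have hχd2 : ∀ x : ℝ, 0 < |x| → |x| < Real.pi →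
        HasDerivAt (deriv χ)
          (F * ((Real.cos x : ℂ) * ψ x + (Real.sin x : ℂ) * deriv ψ x)) x := by
      intro x h1 h2
      have hxI : x ∈ I := by rcases abs_lt.mp h2 with ⟨ha, hb⟩; exact ⟨ha, hb⟩
      have hs := (Real.hasDerivAt_sin x).ofReal_comp
      have hg : HasDerivAt (fun y => F * ((Real.sin y : ℂ) * ψ y))
          (F * ((Real.cos x : ℂ) * ψ x + (Real.sin x : ℂ) * deriv ψ x)) x :=
        (hs.mul (hD x hxI)).const_mul F
      have heq : deriv χ =ᶠ[nhds x] fun y => F * ((Real.sin y : ℂ) * ψ y) := by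
        filter_upwards [hU.mem_nhds (hmemU x h1 h2)] with y hy
        rw [hχderiv y hy]; ring
      exact hg.congr_of_eventuallyEq heq
    -- ODE for χ with parameter m
    have hχode : ∀ x : ℝ, 0 < |x| → |x| < Real.pi →
        deriv (deriv χ) x + 2 * (m : ℂ) * ((Real.cos x : ℂ) / (Real.sin x : ℂ)) * deriv χ x
          = ((lam : ℂ) ^ 2 + (m : ℂ) ^ 2) * χ x := by
      intro x h1 h2
      have hsC : (Real.sin x : ℂ) ≠ 0 := Complex.ofReal_ne_zero.mpr (sin_ne_zero_of_abs h1 h2)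
      rw [(hχd2 x h1 h2).deriv, hχderiv x (hmemU x h1 h2)]
      have hχx : χ x = (Real.sin x : ℂ) * deriv ψ x
          + (2 * ((m : ℂ) + 1) - 1) * (Real.cos x : ℂ) * ψ x := by
        simp only [hχdef, Asph]; push_cast; ring
      rw [hχx, hF]
      have hd : (Real.cos x : ℂ) / (Real.sin x : ℂ) * (Real.sin x : ℂ) = (Real.cos x : ℂ) :=
        div_mul_cancel₀ _ hsC
      linear_combination 2 * (m : ℂ) * ((lam : ℂ) ^ 2 + (m : ℂ) ^ 2) * ψ x * hd
    have hkey := ih χ hχsmooth hχeven hχode r hr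
    have hχ0 : χ 0 = (2 * ((m : ℂ) + 1) - 1) * ψ 0 := by
      simp only [hχdef, Asph, Real.sin_zero, Real.cos_zero, Complex.ofReal_zero,
        Complex.ofReal_one]
      push_cast
      ring
    have hdf : ((2 * (m + 1) - 1 : ℕ).doubleFactorial : ℂ)
        = (2 * (m : ℂ) + 1) * ((2 * m - 1 : ℕ).doubleFactorial : ℂ) := by
      have := df_step m
      push_cast [this]
      ring
    show AsphChain m χ r = ψ 0 * ((2 * (m + 1) - 1 : ℕ).doubleFactorial : ℂ)
      * Complex.cosh ((lam : ℂ) * r)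
    rw [hkey, hχ0, hdf]
    ring

/-- `D̃` maps the analytically continued spherical function `φ_λ(ir)` of
`H^{2n+1}` to `cosh (λ r)` on `(-π, π)`. -/
theorem stmt_11 (n : ℕ) (hn : 1 ≤ n) (lam : ℝ) (ψ : ℝ → ℂ)
    (hψ : ContDiffOn ℝ (⊤ : ℕ∞) ψ (Set.Ioo (-Real.pi) Real.pi))
    (heven : ∀ r : ℝ, ψ (-r) = ψ r) (h0 : ψ 0 = 1)
    (hode : ∀ r : ℝ, 0 < |r| → |r| < Real.pi →
      deriv (deriv ψ) r + 2 * (n : ℂ) * ((Real.cos r : ℂ) / (Real.sin r : ℂ)) * deriv ψ r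
        = (((lam : ℂ)) ^ 2 + (n : ℂ) ^ 2) * ψ r) :
    ∀ r ∈ Set.Ioo (-Real.pi) Real.pi, Dsph n ψ r = (Real.cosh (lam * r) : ℂ) := by
  intro r hr
  have h := key lam n ψ hψ heven hode r hr
  have hne : ((2 * n - 1).doubleFactorial : ℂ) ≠ 0 :=
    Nat.cast_ne_zero.mpr (Nat.doubleFactorial_pos _).ne'
  show ((Nat.doubleFactorial (2 * n - 1) : ℂ))⁻¹ * AsphChain n ψ r = _
  rw [h, h0, Complex.ofReal_cosh, Complex.ofReal_mul]
  field_simp
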